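/- Scaling estimate for rescaled functions in disjoint cells (computational core of the L^p estimate for the oscillating test functions, Lemma 3.4 of the paper): Let 1 ≤ p < ∞, α ≥ 1, M > 0 and ε ∈ (0,1]. Let g ∈ L^p(ℝ³) and let x_1, …, x_N ∈ ℝ³ be points such that the balls B(x_i, ε) are pairwise disjoint and N ≤ M ε^{−3}. Define h : ℝ³ → ℝ by h(x) = ε^{−α} g((x − x_i)/ε^α) if x ∈ B(x_i, ε) for some i, and h(x) = 0 otherwise. Then ‖h‖_{L^p(ℝ³)} ≤ M^{1/p} ε^{−α + 3(α−1)/p} ‖g‖_{L^p(ℝ³)}. -/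

import Mathlib

open MeasureTheory Metric Set
open scoped ENNReal NNReal

noncomputable section

/-- Three-dimensional Euclidean space. -/
abbrev E3 : Type := EuclideanSpace ℝ (Fin 3)

/-- Scaling estimate for rescaled functions in disjoint cells:
if `h(x) = ε^{−α} g((x − x_i)/ε^α)` on `B(x_i, ε)` (pairwise disjoint balls,
`N ≤ M ε^{−3}` of them) and `h = 0` elsewhere, then
`‖h‖_{L^p} ≤ M^{1/p} ε^{−α + 3(α−1)/p} ‖g‖_{L^p}`. -/
theorem scaling_estimate_disjoint_cells
    (p α M ε : ℝ) (hp : 1 ≤ p) (hα : 1 ≤ α) (hM : 0 < M)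
    (hε : ε ∈ Ioc (0:ℝ) 1)
    (g : E3 → ℝ) (hg : MemLp g (ENNReal.ofReal p) volume)
    (N : ℕ) (x : Fin N → E3)
    (hdisj : Pairwise fun i j => Disjoint (ball (x i) ε) (ball (x j) ε))
    (hN : (N : ℝ) ≤ M * ε ^ (-3 : ℝ))
    (h : E3 → ℝ)
    (hin : ∀ i, ∀ y ∈ ball (x i) ε, h y = ε ^ (-α) * g ((ε ^ α)⁻¹ • (y - x i)))
    (hout : ∀ y, (∀ i, y ∉ ball (x i) ε) → h y = 0) :
    eLpNorm h (ENNReal.ofReal p) volume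
      ≤ ENNReal.ofReal (M ^ (1/p) * ε ^ (-α + 3 * (α - 1) / p))
          * eLpNorm g (ENNReal.ofReal p) volume := by
  obtain ⟨hε0, hε1⟩ := hε
  have hp0 : (0:ℝ) < p := lt_of_lt_of_le one_pos hp
  have hq0 : ENNReal.ofReal p ≠ 0 := by
    simp only [ne_eq, ENNReal.ofReal_eq_zero, not_le]; exact hp0
  have hqtop : ENNReal.ofReal p ≠ ∞ := ENNReal.ofReal_ne_top
  have hqt : (ENNReal.ofReal p).toReal = p := ENNReal.toReal_ofReal hp0.le
  rw [eLpNorm_eq_lintegral_rpow_enorm_toReal hq0 hqtop, eLpNorm_eq_lintegral_rpow_enorm_toReal hq0 hqtop, hqt]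
  set F : E3 → ℝ≥0∞ := fun y => (‖h y‖₊ : ℝ≥0∞) ^ p with hF
  set G : E3 → ℝ≥0∞ := fun z => (‖g z‖₊ : ℝ≥0∞) ^ p with hG
  set Ig : ℝ≥0∞ := ∫⁻ z, G z with hIg
  set c : ℝ := (ε ^ α)⁻¹ with hc
  have hεα : (0:ℝ) < ε ^ α := Real.rpow_pos_of_pos hε0 α
  have hcne : c ≠ 0 := inv_ne_zero (ne_of_gt hεα)
  set A : ℝ≥0∞ := ENNReal.ofReal (ε ^ (-α)) ^ p with hA
  set B : ℝ≥0∞ := ENNReal.ofReal (ε ^ (3*α)) with hB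
  -- change of variables for each ball
  have hmap : ∀ i, ∫⁻ y, G (c • (y - x i)) = B * Ig := by
    intro i
    have h1 : ∫⁻ y, G (c • (y - x i)) = ∫⁻ y, (fun z => G (c • z)) y := by
      simpa using lintegral_sub_right_eq_self (μ := volume) (fun z => G (c • z)) (x i)
    rw [h1]
    have hemb : MeasurableEmbedding (fun z : E3 => c • z) :=
      (Homeomorph.smul (isUnit_iff_ne_zero.2 hcne).unit).toMeasurableEquiv.measurableEmbedding
    have h2 : ∫⁻ z, G (c • z) = ∫⁻ z, G z ∂(Measure.map (c • ·) volume) :=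
      (hemb.lintegral_map G).symm
    rw [h2, Measure.map_addHaar_smul volume hcne]
    rw [lintegral_smul_measure]
    congr 1
    rw [hB]
    congr 1
    have : Module.finrank ℝ E3 = 3 := finrank_euclideanSpace_fin
    rw [this, hc]
    rw [abs_of_nonneg (by positivity)]
    rw [inv_pow, inv_inv, ← Real.rpow_natCast (ε ^ α) 3, ← Real.rpow_mul hε0.le]
    norm_num [mul_comm]
  -- bound on each ball
  have hball : ∀ i, ∫⁻ y in ball (x i) ε, F y ≤ A * (B * Ig) := by
    intro i
    have hcong : ∫⁻ y in ball (x i) ε, F y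
        = ∫⁻ y in ball (x i) ε, A * G (c • (y - x i)) := by
      refine setLIntegral_congr_fun measurableSet_ball ?_
      intro y hy
      rw [hF]
      simp only
      rw [hin i y hy, nnnorm_mul, ENNReal.coe_mul,
        ENNReal.mul_rpow_of_nonneg _ _ hp0.le,
        ← enorm_eq_nnnorm, Real.enorm_eq_ofReal (Real.rpow_nonneg hε0.le _)]
    rw [hcong]
    have hAtop : A ≠ ∞ := by
      rw [hA]
      exact ENNReal.rpow_ne_top_of_nonneg hp0.le ENNReal.ofReal_ne_top
    rw [lintegral_const_mul' _ _ hAtop]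
    refine mul_le_mul_right ?_ A
    calc ∫⁻ y in ball (x i) ε, G (c • (y - x i))
        ≤ ∫⁻ y, G (c • (y - x i)) := setLIntegral_le_lintegral _ _
      _ = B * Ig := hmap i
  -- h vanishes outside the union
  set s : Set E3 := ⋃ i, ball (x i) ε with hs
  have hsm : MeasurableSet s := MeasurableSet.iUnion fun i => measurableSet_ball
  have hrestrict : ∫⁻ y, F y = ∫⁻ y in s, F y := by
    rw [← lintegral_indicator hsm F]
    congr 1
    funext y
    by_cases hy : y ∈ s
    · simp [indicator, hy]
    · have : h y = 0 := hout y (by simpa [hs, mem_iUnion] using hy)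
      simp [indicator, hy, hF, this, ENNReal.zero_rpow_of_pos hp0]
  -- main lintegral bound
  have hmain : ∫⁻ y, F y ≤ ENNReal.ofReal (M * ε ^ (-3:ℝ)) * (A * (B * Ig)) := by
    calc ∫⁻ y, F y = ∫⁻ y in s, F y := hrestrict
      _ ≤ ∑' i, ∫⁻ y in ball (x i) ε, F y := lintegral_iUnion_le _ _
      _ = ∑ i, ∫⁻ y in ball (x i) ε, F y := tsum_fintype _
      _ ≤ ∑ _i : Fin N, A * (B * Ig) := Finset.sum_le_sum fun i _ => hball i
      _ = (N : ℝ≥0∞) * (A * (B * Ig)) := by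
          rw [Finset.sum_const, Finset.card_univ, Fintype.card_fin, nsmul_eq_mul]
      _ ≤ ENNReal.ofReal (M * ε ^ (-3:ℝ)) * (A * (B * Ig)) := by
          refine mul_le_mul_left ?_ _
          rw [← ENNReal.ofReal_natCast]
          exact ENNReal.ofReal_le_ofReal hN
  -- combine constants
  have hAeq : A = ENNReal.ofReal (ε ^ (-α * p)) := by
    rw [hA, Real.rpow_mul hε0.le]
    exact ENNReal.ofReal_rpow_of_pos (Real.rpow_pos_of_pos hε0 (-α))
  have hconst : ENNReal.ofReal (M * ε ^ (-3:ℝ)) * (A * B)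
      = ENNReal.ofReal (M * ε ^ (-3 + (-α * p) + 3 * α)) := by
    rw [hAeq, hB, ← ENNReal.ofReal_mul (by positivity), ← ENNReal.ofReal_mul (by positivity)]
    congr 1
    rw [Real.rpow_add hε0, Real.rpow_add hε0]
    ring
  have hfinal : (∫⁻ y, F y) ^ (1/p)
      ≤ (ENNReal.ofReal (M * ε ^ (-3 + (-α * p) + 3 * α))) ^ (1/p) * Ig ^ (1/p) := by
    rw [← ENNReal.mul_rpow_of_nonneg _ _ (by positivity : (0:ℝ) ≤ 1/p)]
    refine ENNReal.rpow_le_rpow ?_ (by positivity)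
    calc ∫⁻ y, F y ≤ ENNReal.ofReal (M * ε ^ (-3:ℝ)) * (A * (B * Ig)) := hmain
      _ = ENNReal.ofReal (M * ε ^ (-3:ℝ)) * (A * B) * Ig := by ring
      _ = ENNReal.ofReal (M * ε ^ (-3 + (-α * p) + 3 * α)) * Ig := by rw [hconst]
  refine hfinal.trans (le_of_eq ?_)
  congr 1
  have hE : -α + 3 * (α - 1) / p = (-3 + -α * p + 3 * α) * (1/p) := by
    field_simp; ring
  rw [hE, Real.rpow_mul hε0.le, ← Real.mul_rpow hM.le (by positivity)]
  exact ENNReal.ofReal_rpow_of_pos (by positivity)
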